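/- In the block construction, if additionally m · 2^{−s} ≤ 1/4, then for every x ∈ [n] ∖ T the abundance of x satisfies 1/m ≤ γ_x ≤ 2/m. -/

import Mathlib

open Finset

/-- A family of finite sets is union-closed if it contains the union of any two of
its members. -/
def UnionClosed {α : Type*} [DecidableEq α] (F : Finset (Finset α)) : Prop :=
  ∀ A ∈ F, ∀ B ∈ F, A ∪ B ∈ F

/-- The abundance of `x` with respect to a family `F`. -/
noncomputable def abundance {α : Type*} [DecidableEq α] (F : Finset (Finset α)) (x : α) : ℝ :=
  ((F.filter (fun A => x ∈ A)).card : ℝ) / (F.card : ℝ)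

/-- The average overlap density of `F`. -/
noncomputable def AOD {α : Type*} [DecidableEq α] (F : Finset (Finset α)) : ℝ :=
  (1 / (((F.erase ∅).card : ℝ))) *
    ∑ A ∈ F.erase ∅, (1 / (A.card : ℝ)) * ∑ x ∈ A, abundance F x

/-- The union-closed family generated by `G = {B i ∪ {j} : i, j ∈ T}`:
all unions of nonempty subcollections of `G`. -/
def blockFamily {n m : ℕ} (B : Fin m → Finset (Fin n)) (T : Finset (Fin n)) :
    Finset (Finset (Fin n)) :=
  ((((univ : Finset (Fin m)) ×ˢ T).image (fun p => B p.1 ∪ {p.2})).powerset.filter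
      (fun C => C.Nonempty)).image (fun C => C.sup id)

section Helpers

variable {n m : ℕ} {B T : Fin m → Finset (Fin n)}

lemma bf_inter (hT : ∀ i, T i ⊆ B i)
    (hBdisj : ∀ i j : Fin m, i ≠ j → Disjoint (B i) (B j)) (i : Fin m) :
    ((univ : Finset (Fin m)).biUnion T) ∩ B i = T i := by
  ext a
  simp only [mem_inter, mem_biUnion, mem_univ, true_and]
  constructor
  · rintro ⟨⟨j, hj⟩, hb⟩
    rcases eq_or_ne j i with rfl | hne
    · exact hj
    · exact absurd hb (Finset.disjoint_left.1 (hBdisj j i hne) (hT j hj))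
  · intro h; exact ⟨⟨i, h⟩, hT i h⟩

lemma bf_eq (hT : ∀ i, T i ⊆ B i) (hTne : ∀ i, (T i).Nonempty) :
    blockFamily B ((univ : Finset (Fin m)).biUnion T) =
      (((univ : Finset (Finset (Fin m))).filter (fun I => I.Nonempty)).sigma
        (fun I => ((((univ : Finset (Fin m)).biUnion T)) \ I.biUnion T).powerset)).image
        (fun p => p.1.biUnion B ∪ p.2) := by
  ext A
  simp only [blockFamily, mem_image, mem_filter, mem_powerset, mem_sigma, mem_univ, true_and]
  constructor
  · rintro ⟨C, ⟨hCsub, hCne⟩, rfl⟩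
    have hgen : ∀ g ∈ C, ∃ i : Fin m, ∃ j ∈ (univ : Finset (Fin m)).biUnion T,
        g = B i ∪ {j} := by
      intro g hg
      have := hCsub hg
      simp only [mem_image, mem_product, mem_univ, true_and, Prod.exists] at this
      obtain ⟨i, j, hj, hgij⟩ := this
      exact ⟨i, j, hj, hgij.symm⟩
    set I : Finset (Fin m) := univ.filter (fun i => B i ⊆ C.sup id) with hI
    refine ⟨⟨I, C.sup id \ I.biUnion B⟩, ⟨?_, ?_⟩, ?_⟩
    · obtain ⟨g, hg⟩ := hCne
      obtain ⟨i, j, hj, rfl⟩ := hgen g hg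
      have hsub : B i ∪ {j} ⊆ C.sup id := Finset.le_sup (f := id) hg
      have hiI : i ∈ I := by
        simp only [hI, mem_filter, mem_univ, true_and]
        exact fun a ha => hsub (mem_union_left _ ha)
      exact ⟨i, hiI⟩
    · intro a ha
      rw [mem_sdiff] at ha ⊢
      obtain ⟨haA, hanb⟩ := ha
      refine ⟨?_, fun h => hanb ?_⟩
      · obtain ⟨g, hg, hag⟩ := Finset.mem_sup.1 haA
        obtain ⟨i, j, hj, rfl⟩ := hgen g hg
        rcases mem_union.1 hag with hab | haj
        · exfalso
          apply hanb
          rw [mem_biUnion]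
          refine ⟨i, ?_, hab⟩
          have hsub : B i ∪ {j} ⊆ C.sup id := Finset.le_sup (f := id) hg
          simp only [hI, mem_filter, mem_univ, true_and]
          exact fun a ha => hsub (mem_union_left _ ha)
        · rwa [mem_singleton.1 haj]
      · rw [mem_biUnion] at h ⊢
        obtain ⟨i, hi, hai⟩ := h
        exact ⟨i, hi, hT i hai⟩
    · have hsub : I.biUnion B ⊆ C.sup id := by
        intro a ha
        rw [mem_biUnion] at ha
        obtain ⟨i, hi, hai⟩ := ha
        exact (mem_filter.1 hi).2 hai
      exact union_sdiff_of_subset hsub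
  · rintro ⟨⟨I, J⟩, ⟨hIne, hJ⟩, rfl⟩
    obtain ⟨i₀, hi₀⟩ := hIne
    obtain ⟨j₀, hj₀⟩ := hTne i₀
    have hj₀' : j₀ ∈ (univ : Finset (Fin m)).biUnion T := mem_biUnion.2 ⟨i₀, mem_univ _, hj₀⟩
    refine ⟨I.image (fun i => B i ∪ {j₀}) ∪ J.image (fun j => B i₀ ∪ {j}), ⟨?_, ?_⟩, ?_⟩
    · apply union_subset
      · intro g hg
        obtain ⟨i, _, rfl⟩ := mem_image.1 hg
        exact mem_image.2 ⟨(i, j₀), mem_product.2 ⟨mem_univ _, hj₀'⟩, rfl⟩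
      · intro g hg
        obtain ⟨j, hjJ, rfl⟩ := mem_image.1 hg
        have : j ∈ (univ : Finset (Fin m)).biUnion T := (mem_sdiff.1 (hJ hjJ)).1
        exact mem_image.2 ⟨(i₀, j), mem_product.2 ⟨mem_univ _, this⟩, rfl⟩
    · exact (Finset.Nonempty.image ⟨i₀, hi₀⟩ _).mono subset_union_left
    · ext a
      rw [Finset.mem_sup]
      simp only [mem_union, mem_image, id_eq, mem_biUnion, mem_singleton]
      constructor
      · rintro ⟨g, hg | hg, hag⟩
        · obtain ⟨i, hi, rfl⟩ := hg
          rcases mem_union.1 hag with h | h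
          · exact Or.inl ⟨i, hi, h⟩
          · exact Or.inl ⟨i₀, hi₀, hT i₀ (mem_singleton.1 h ▸ hj₀)⟩
        · obtain ⟨j, hj, rfl⟩ := hg
          rcases mem_union.1 hag with h | h
          · exact Or.inl ⟨i₀, hi₀, h⟩
          · exact Or.inr (mem_singleton.1 h ▸ hj)
      · rintro (⟨i, hi, hai⟩ | haJ)
        · exact ⟨B i ∪ {j₀}, Or.inl ⟨i, hi, rfl⟩, mem_union_left _ hai⟩
        · exact ⟨B i₀ ∪ {a}, Or.inr ⟨a, haJ, rfl⟩, mem_union_right _ (mem_singleton_self a)⟩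

lemma bf_key (hT : ∀ i, T i ⊆ B i)
    (hBdisj : ∀ i j : Fin m, i ≠ j → Disjoint (B i) (B j))
    (hne : ∀ i, ¬ B i ⊆ T i)
    {I : Finset (Fin m)} {J : Finset (Fin n)}
    (hJ : J ⊆ ((univ : Finset (Fin m)).biUnion T) \ I.biUnion T) (i : Fin m) :
    B i ⊆ I.biUnion B ∪ J ↔ i ∈ I := by
  constructor
  · intro hsub
    by_contra hiI
    apply hne i
    intro a ha
    rcases mem_union.1 (hsub ha) with hb | hj
    · obtain ⟨i', hi', hai'⟩ := mem_biUnion.1 hb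
      exact absurd hai' (Finset.disjoint_left.1 (hBdisj i i' (fun h => hiI (h ▸ hi'))) ha)
    · have haT : a ∈ (univ : Finset (Fin m)).biUnion T := (mem_sdiff.1 (hJ hj)).1
      have : a ∈ ((univ : Finset (Fin m)).biUnion T) ∩ B i := mem_inter.2 ⟨haT, ha⟩
      rwa [bf_inter hT hBdisj] at this
  · intro hi a ha
    exact mem_union_left _ (mem_biUnion.2 ⟨i, hi, ha⟩)

lemma bf_disj (hT : ∀ i, T i ⊆ B i)
    (hBdisj : ∀ i j : Fin m, i ≠ j → Disjoint (B i) (B j))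
    {I : Finset (Fin m)} {J : Finset (Fin n)}
    (hJ : J ⊆ ((univ : Finset (Fin m)).biUnion T) \ I.biUnion T) :
    Disjoint (I.biUnion B) J := by
  rw [Finset.disjoint_left]
  intro a hab haJ
  obtain ⟨i, hi, hai⟩ := mem_biUnion.1 hab
  have h1 := mem_sdiff.1 (hJ haJ)
  have : a ∈ ((univ : Finset (Fin m)).biUnion T) ∩ B i := mem_inter.2 ⟨h1.1, hai⟩
  rw [bf_inter hT hBdisj] at this
  exact h1.2 (mem_biUnion.2 ⟨i, hi, this⟩)

lemma bf_injOn (hT : ∀ i, T i ⊆ B i)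
    (hBdisj : ∀ i j : Fin m, i ≠ j → Disjoint (B i) (B j))
    (hne : ∀ i, ¬ B i ⊆ T i) :
    Set.InjOn (fun p : (_ : Finset (Fin m)) × Finset (Fin n) => p.1.biUnion B ∪ p.2)
      ↑((((univ : Finset (Finset (Fin m))))).sigma
        (fun I => ((((univ : Finset (Fin m)).biUnion T)) \ I.biUnion T).powerset)) := by
  rintro ⟨I, J⟩ hp ⟨I', J'⟩ hp' h
  simp only [Finset.coe_sigma, Set.mem_sigma_iff, Finset.mem_coe, mem_powerset] at hp hp'
  simp only at h
  have hJ : J ⊆ ((univ : Finset (Fin m)).biUnion T) \ I.biUnion T := hp.2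
  have hJ' : J' ⊆ ((univ : Finset (Fin m)).biUnion T) \ I'.biUnion T := hp'.2
  have hII : I = I' := by
    ext i
    rw [← bf_key hT hBdisj hne hJ i, ← bf_key hT hBdisj hne hJ' i, h]
  subst hII
  have hJJ : J = J' := by
    have e1 : (I.biUnion B ∪ J) \ I.biUnion B = J :=
      union_sdiff_cancel_left (bf_disj hT hBdisj hJ)
    have e2 : (I.biUnion B ∪ J') \ I.biUnion B = J' :=
      union_sdiff_cancel_left (bf_disj hT hBdisj hJ')
    rw [← e1, ← e2, h]
  rw [hJJ]

lemma bf_fiber_card {s : ℕ} (hT : ∀ i, T i ⊆ B i)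
    (hBdisj : ∀ i j : Fin m, i ≠ j → Disjoint (B i) (B j))
    (hTcard : ∀ i, (T i).card = s) (I : Finset (Fin m)) :
    ((((univ : Finset (Fin m)).biUnion T)) \ I.biUnion T).card = s * (m - I.card) := by
  have hTdisj : ∀ i j : Fin m, i ≠ j → Disjoint (T i) (T j) := fun i j hij =>
    Finset.disjoint_of_subset_left (hT i) (Finset.disjoint_of_subset_right (hT j) (hBdisj i j hij))
  have heq : (((univ : Finset (Fin m)).biUnion T)) \ I.biUnion T = (univ \ I).biUnion T := by
    ext a
    simp only [mem_sdiff, mem_biUnion, mem_univ, true_and]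
    constructor
    · rintro ⟨⟨j, hj⟩, hnot⟩
      exact ⟨j, fun hjI => hnot ⟨j, hjI, hj⟩, hj⟩
    · rintro ⟨j, hjI, hj⟩
      refine ⟨⟨j, hj⟩, fun ⟨i, hiI, hai⟩ => ?_⟩
      rcases eq_or_ne i j with rfl | hij
      · exact hjI hiI
      · exact absurd hj (Finset.disjoint_left.1 (hTdisj i j hij) hai)
  rw [heq, card_biUnion (fun i _ j _ hij => hTdisj i j hij)]
  rw [Finset.sum_congr rfl (fun i _ => hTcard i), Finset.sum_const, smul_eq_mul,
    card_sdiff_of_subset (subset_univ I), card_univ, Fintype.card_fin, Nat.mul_comm]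

lemma sum_pow_powerset {ι : Type*} [DecidableEq ι] (t : Finset ι) (q : ℕ) :
    ∑ u ∈ t.powerset, q ^ (t.card - u.card) = (q + 1) ^ t.card := by
  have h := Finset.prod_add (fun _ : ι => (1 : ℕ)) (fun _ => q) t
  simp only [prod_const_one, one_mul, prod_const] at h
  calc ∑ u ∈ t.powerset, q ^ (t.card - u.card)
      = ∑ u ∈ t.powerset, q ^ (t \ u).card := by
        refine Finset.sum_congr rfl fun u hu => ?_
        rw [card_sdiff_of_subset (mem_powerset.1 hu)]
    _ = (1 + q) ^ t.card := h.symm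
    _ = (q + 1) ^ t.card := by rw [add_comm]

lemma sum_pow_mem (i₀ : Fin m) (q : ℕ) :
    ∑ I ∈ (univ : Finset (Finset (Fin m))).filter (fun I => i₀ ∈ I), q ^ (m - I.card)
      = (q + 1) ^ (m - 1) := by
  have hcard : ((univ : Finset (Fin m)).erase i₀).card = m - 1 := by
    rw [card_erase_of_mem (mem_univ _), card_univ, Fintype.card_fin]
  rw [← hcard, ← sum_pow_powerset ((univ : Finset (Fin m)).erase i₀) q]
  refine Finset.sum_nbij' (fun I => I.erase i₀) (fun u => insert i₀ u) ?_ ?_ ?_ ?_ ?_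
  · intro I hI
    rw [mem_powerset]
    exact Finset.erase_subset_erase _ (subset_univ I)
  · intro u hu
    simp only [mem_filter, mem_univ, true_and]
    exact mem_insert_self _ _
  · intro I hI
    exact insert_erase (mem_filter.1 hI).2
  · intro u hu
    refine erase_insert fun hi => ?_
    exact absurd (mem_powerset.1 hu hi) (notMem_erase _ _)
  · intro I hI
    have h1 : 1 ≤ I.card := card_pos.2 ⟨i₀, (mem_filter.1 hI).2⟩
    have h2 : I.card ≤ m := by
      simpa [card_univ] using card_le_card (subset_univ I)
    rw [hcard, card_erase_of_mem (mem_filter.1 hI).2]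
    congr 1
    omega

lemma sum_pow_nonempty (q : ℕ) :
    (∑ I ∈ (univ : Finset (Finset (Fin m))).filter (fun I => I.Nonempty), q ^ (m - I.card))
      + q ^ m = (q + 1) ^ m := by
  have h := sum_pow_powerset (univ : Finset (Fin m)) q
  rw [powerset_univ, card_univ, Fintype.card_fin] at h
  have hfe : (univ : Finset (Finset (Fin m))).filter (fun I => I.Nonempty)
      = (univ : Finset (Finset (Fin m))).erase ∅ := by
    ext I
    simp [Finset.nonempty_iff_ne_empty]
  calc (∑ I ∈ (univ : Finset (Finset (Fin m))).filter (fun I => I.Nonempty), q ^ (m - I.card))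
        + q ^ m
      = (∑ I ∈ (univ : Finset (Finset (Fin m))).erase ∅, q ^ (m - I.card))
        + q ^ (m - (∅ : Finset (Fin m)).card) := by rw [hfe]; simp
    _ = ∑ I ∈ (univ : Finset (Finset (Fin m))), q ^ (m - I.card) :=
        Finset.sum_erase_add _ _ (mem_univ ∅)
    _ = (q + 1) ^ m := h

end Helpers

/-- In the block construction, if `m · 2^{−s} ≤ 1/4`, then for every
`x ∈ [n] ∖ T` the abundance of `x` satisfies `1/m ≤ γ_x ≤ 2/m`. -/
theorem blockFamily_abundance_outside_T_bounds
    (k m s : ℕ) (hk : 0 < k) (hm : 2 ≤ m) (hs : 0 < s) (hsk : s + 2 ≤ k)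
    (B : Fin m → Finset (Fin (k * m)))
    (hBcard : ∀ i, (B i).card = k)
    (hBdisj : ∀ i j : Fin m, i ≠ j → Disjoint (B i) (B j))
    (hBcover : (Finset.univ : Finset (Fin m)).biUnion B = (Finset.univ : Finset (Fin (k * m))))
    (T : Fin m → Finset (Fin (k * m)))
    (hT : ∀ i, T i ⊆ B i) (hTcard : ∀ i, (T i).card = s)
    (hτ : (m : ℝ) * (2 : ℝ) ^ (-(s : ℤ)) ≤ 1 / 4) :
    ∀ x : Fin (k * m), x ∉ (univ : Finset (Fin m)).biUnion T →
      1 / (m : ℝ) ≤ abundance (blockFamily B ((univ : Finset (Fin m)).biUnion T)) x ∧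
      abundance (blockFamily B ((univ : Finset (Fin m)).biUnion T)) x ≤ 2 / (m : ℝ) := by
  intro x hx
  classical
  set T' := (univ : Finset (Fin m)).biUnion T with hT'
  have hTne : ∀ i, (T i).Nonempty := fun i => card_pos.1 (by rw [hTcard i]; exact hs)
  have hne : ∀ i, ¬ B i ⊆ T i := by
    intro i h
    have := card_le_card h
    rw [hBcard i, hTcard i] at this
    omega
  obtain ⟨i₀, -, hxB⟩ := mem_biUnion.1 (hBcover ▸ mem_univ x)
  set q := 2 ^ s with hq
  have hfam := bf_eq (B := B) (T := T) hT hTne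
  have hinjfull := bf_injOn (B := B) (T := T) hT hBdisj hne
  -- card of the family
  have hcardF : (blockFamily B T').card
      = ∑ I ∈ (univ : Finset (Finset (Fin m))).filter (fun I => I.Nonempty),
          q ^ (m - I.card) := by
    rw [hfam, card_image_of_injOn (hinjfull.mono ?_), card_sigma]
    · refine Finset.sum_congr rfl fun I _ => ?_
      rw [card_powerset, bf_fiber_card hT hBdisj hTcard, pow_mul]
    · intro p hp
      simp only [Finset.mem_coe, mem_sigma, mem_filter] at hp ⊢
      exact ⟨mem_univ _, hp.2⟩
  -- card of the filtered family
  have hfilt : (blockFamily B T').filter (fun A => x ∈ A)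
      = (((univ : Finset (Finset (Fin m))).filter (fun I => i₀ ∈ I)).sigma
          (fun I => (T' \ I.biUnion T).powerset)).image
          (fun p => p.1.biUnion B ∪ p.2) := by
    rw [hfam, filter_image]
    congr 1
    ext ⟨I, J⟩
    simp only [mem_filter, mem_sigma, mem_univ, true_and, mem_powerset]
    constructor
    · rintro ⟨⟨hIne, hJ⟩, hxf⟩
      refine ⟨?_, hJ⟩
      rcases mem_union.1 hxf with hb | hj
      · obtain ⟨i, hi, hxi⟩ := mem_biUnion.1 hb
        rcases eq_or_ne i i₀ with rfl | hne'
        · exact hi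
        · exact absurd hxB (Finset.disjoint_left.1 (hBdisj i i₀ hne') hxi)
      · exact absurd (mem_sdiff.1 (hJ hj)).1 hx
    · rintro ⟨hi₀, hJ⟩
      exact ⟨⟨⟨i₀, hi₀⟩, hJ⟩, mem_union_left _ (mem_biUnion.2 ⟨i₀, hi₀, hxB⟩)⟩
  have hcardFx : ((blockFamily B T').filter (fun A => x ∈ A)).card
      = ∑ I ∈ (univ : Finset (Finset (Fin m))).filter (fun I => i₀ ∈ I),
          q ^ (m - I.card) := by
    rw [hfilt, card_image_of_injOn (hinjfull.mono ?_), card_sigma]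
    · refine Finset.sum_congr rfl fun I _ => ?_
      rw [card_powerset, bf_fiber_card hT hBdisj hTcard, pow_mul]
    · intro p hp
      simp only [Finset.mem_coe, mem_sigma, mem_filter] at hp ⊢
      exact ⟨mem_univ _, hp.2⟩
  -- closed forms
  have hNx : ((blockFamily B T').filter (fun A => x ∈ A)).card = (q + 1) ^ (m - 1) := by
    rw [hcardFx, sum_pow_mem]
  have hN : (blockFamily B T').card + q ^ m = (q + 1) ^ m := by
    rw [hcardF, sum_pow_nonempty]
  -- pass to the reals
  set Q : ℝ := (2 : ℝ) ^ s with hQ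
  have hQpos : (0 : ℝ) < Q := by positivity
  have hmpos : (0 : ℝ) < (m : ℝ) := by
    have : (2 : ℝ) ≤ (m : ℝ) := by exact_mod_cast hm
    linarith
  have hm4 : 4 * (m : ℝ) ≤ Q := by
    have h2 : ((2 : ℝ)) ^ (-(s : ℤ)) = Q⁻¹ := by
      rw [zpow_neg, zpow_natCast, hQ]
    rw [h2] at hτ
    have h3 := mul_le_mul_of_nonneg_right hτ (le_of_lt hQpos)
    rw [mul_assoc, inv_mul_cancel₀ (ne_of_gt hQpos), mul_one] at h3
    linarith
  have hNvalR : ((blockFamily B T').card : ℝ) = (Q + 1) ^ m - Q ^ m := by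
    have h := congrArg (fun t : ℕ => (t : ℝ)) hN
    rw [hq] at h
    push_cast at h
    rw [← hQ] at h
    linarith
  have hNxValR : (((blockFamily B T').filter (fun A => x ∈ A)).card : ℝ)
      = (Q + 1) ^ (m - 1) := by
    have h := congrArg (fun t : ℕ => (t : ℝ)) hNx
    rw [hq] at h
    push_cast at h
    rw [← hQ] at h
    exact h
  have habound : abundance (blockFamily B T') x
      = (Q + 1) ^ (m - 1) / ((Q + 1) ^ m - Q ^ m) := by
    rw [abundance, hNxValR, hNvalR]
  -- the geometric sum identity and bounds
  have hgeom : (Q + 1) ^ m - Q ^ m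
      = ∑ i ∈ Finset.range m, (Q + 1) ^ i * Q ^ (m - 1 - i) := by
    have h := geom_sum₂_mul (Q + 1) Q m
    have e : (Q + 1) - Q = 1 := by ring
    rw [e, mul_one] at h
    exact h.symm
  have hhi : (Q + 1) ^ m - Q ^ m ≤ (m : ℝ) * (Q + 1) ^ (m - 1) := by
    rw [hgeom]
    have := Finset.sum_le_card_nsmul (Finset.range m)
        (fun i => (Q + 1) ^ i * Q ^ (m - 1 - i)) ((Q + 1) ^ (m - 1)) ?_
    · rwa [card_range, nsmul_eq_mul] at this
    · intro i hi
      have him : i ≤ m - 1 := by have := mem_range.1 hi; omega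
      calc (Q + 1) ^ i * Q ^ (m - 1 - i)
          ≤ (Q + 1) ^ i * (Q + 1) ^ (m - 1 - i) := by
            apply mul_le_mul_of_nonneg_left
              (pow_le_pow_left₀ (by positivity) (by linarith) _) (by positivity)
        _ = (Q + 1) ^ (m - 1) := by rw [← pow_add]; congr 1; omega
  have hlo : (m : ℝ) * Q ^ (m - 1) ≤ (Q + 1) ^ m - Q ^ m := by
    rw [hgeom]
    have := Finset.card_nsmul_le_sum (Finset.range m)
        (fun i => (Q + 1) ^ i * Q ^ (m - 1 - i)) (Q ^ (m - 1)) ?_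
    · rwa [card_range, nsmul_eq_mul] at this
    · intro i hi
      have him : i ≤ m - 1 := by have := mem_range.1 hi; omega
      calc Q ^ (m - 1) = Q ^ i * Q ^ (m - 1 - i) := by rw [← pow_add]; congr 1; omega
        _ ≤ (Q + 1) ^ i * Q ^ (m - 1 - i) := by
            apply mul_le_mul_of_nonneg_right
              (pow_le_pow_left₀ (le_of_lt hQpos) (by linarith) _) (by positivity)
  -- Bernoulli bound
  have h1 : (0 : ℝ) < Q + 1 := by linarith
  have hber : (Q + 1) ^ (m - 1) ≤ 2 * Q ^ (m - 1) := by
    have hd1 : 1 / (Q + 1) ≤ 1 := by rw [div_le_one h1]; linarith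
    have hb := one_add_mul_le_pow (a := -(1 / (Q + 1))) (by linarith) (m - 1)
    have he : (1 : ℝ) + -(1 / (Q + 1)) = Q / (Q + 1) := by field_simp; ring
    rw [he] at hb
    have hc : ((m - 1 : ℕ) : ℝ) ≤ (m : ℝ) := by
      exact_mod_cast Nat.cast_le.2 (Nat.sub_le m 1)
    have hcd : ((m - 1 : ℕ) : ℝ) * (1 / (Q + 1)) ≤ 1 / 2 := by
      rw [mul_one_div, div_le_div_iff₀ h1 (by norm_num : (0:ℝ) < 2)]
      linarith [hc, hm4]
    have hhalf : (1 : ℝ) / 2 ≤ (Q / (Q + 1)) ^ (m - 1) := by linarith [hb, hcd]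
    have hqq : (Q / (Q + 1)) ^ (m - 1) * (Q + 1) ^ (m - 1) = Q ^ (m - 1) := by
      rw [← mul_pow, div_mul_cancel₀ _ (ne_of_gt h1)]
    have h2 := mul_le_mul_of_nonneg_right hhalf (pow_nonneg h1.le (m - 1))
    rw [hqq] at h2
    linarith
  have hNpos : (0 : ℝ) < (Q + 1) ^ m - Q ^ m :=
    lt_of_lt_of_le (by positivity) hlo
  rw [habound]
  constructor
  · rw [div_le_div_iff₀ hmpos hNpos]
    calc 1 * ((Q + 1) ^ m - Q ^ m) = (Q + 1) ^ m - Q ^ m := one_mul _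
      _ ≤ (m : ℝ) * (Q + 1) ^ (m - 1) := hhi
      _ = (Q + 1) ^ (m - 1) * (m : ℝ) := mul_comm _ _
  · rw [div_le_div_iff₀ hNpos hmpos]
    have hstep := mul_le_mul_of_nonneg_left hber (le_of_lt hmpos)
    calc (Q + 1) ^ (m - 1) * (m : ℝ) = (m : ℝ) * (Q + 1) ^ (m - 1) := mul_comm _ _
      _ ≤ (m : ℝ) * (2 * Q ^ (m - 1)) := hstep
      _ = 2 * ((m : ℝ) * Q ^ (m - 1)) := by ring
      _ ≤ 2 * ((Q + 1) ^ m - Q ^ m) := by linarith
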